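/- If T is an infinite division ring and a ∈ GL(n,T), then the semigroup ⟨a,D⟩ contains a matrix b such that all diagonal entries of b are nonzero and, whenever b_{ij} = 0, one has b_{ir} b_{rj} = 0 for every index r. -/

import Mathlib

/-- Membership in the semigroup `⟨a, D⟩`. -/
def MemSemigroupGen {n : ℕ} {R : Type*} [Ring R]
    (a b : (Matrix (Fin n) (Fin n) R)ˣ) : Prop :=
  ∃ L : List (Matrix (Fin n) (Fin n) R)ˣ,
    (∀ x ∈ L, x = a ∨ (x.val).IsDiag) ∧ a ∈ L ∧ L.prod = b

open Matrix Finset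

open scoped Classical

namespace SemigroupGood

variable {n : ℕ} {T : Type*} [DivisionRing T]

noncomputable def suppF (M : Matrix (Fin n) (Fin n) T) : Finset (Fin n × Fin n) :=
  Finset.univ.filter fun p => M p.1 p.2 ≠ 0

lemma mem_suppF {M : Matrix (Fin n) (Fin n) T} {i j : Fin n} :
    (i, j) ∈ suppF M ↔ M i j ≠ 0 := by simp [suppF]

noncomputable def relComp (A B : Finset (Fin n × Fin n)) : Finset (Fin n × Fin n) :=
  Finset.univ.filter fun p => ∃ r, (p.1, r) ∈ A ∧ (r, p.2) ∈ B

lemma mem_relComp {A B : Finset (Fin n × Fin n)} {i j : Fin n} :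
    (i, j) ∈ relComp A B ↔ ∃ r, (i, r) ∈ A ∧ (r, j) ∈ B := by simp [relComp]

noncomputable def relPow (S : Finset (Fin n × Fin n)) : ℕ → Finset (Fin n × Fin n)
  | 0 => S
  | (k+1) => relComp (relPow S k) S

lemma relPow_trans {S : Finset (Fin n × Fin n)} :
    ∀ (k j : ℕ) {x y z : Fin n}, (x, y) ∈ relPow S j → (y, z) ∈ relPow S k →
      (x, z) ∈ relPow S (j + k + 1)
  | 0, j, x, y, z, h1, h2 => mem_relComp.2 ⟨y, h1, h2⟩
  | (k+1), j, x, y, z, h1, h2 => by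
      obtain ⟨s, hs1, hs2⟩ := mem_relComp.1 h2
      exact mem_relComp.2 ⟨s, relPow_trans k j h1 hs1, hs2⟩

lemma relPow_step {S : Finset (Fin n × Fin n)} {u v : ℕ}
    (h : relPow S u = relPow S v) (c : ℕ) :
    relPow S (u + c) = relPow S (v + c) := by
  induction c with
  | zero => exact h
  | succ c ih => exact congrArg (fun X => relComp X S) ih

/-- there is m with relPow S (m+m+1) = relPow S m, i.e. S^(m+1) idempotent. -/
lemma exists_idem (S : Finset (Fin n × Fin n)) :
    ∃ m : ℕ, relPow S (m + m + 1) = relPow S m := by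
  obtain ⟨p', q', hne, heq⟩ :=
    Finite.exists_ne_map_eq_of_infinite (fun k : ℕ => relPow S k)
  obtain ⟨p, q, hlt, hpq⟩ : ∃ p q, p < q ∧ relPow S p = relPow S q := by
    rcases lt_or_gt_of_ne hne with h | h
    · exact ⟨p', q', h, heq⟩
    · exact ⟨q', p', h, heq.symm⟩
  obtain ⟨t, ht⟩ : ∃ t, q = p + (t + 1) := ⟨q - p - 1, by omega⟩
  set t1 := t + 1 with ht1
  have key : ∀ k c : ℕ, relPow S (p + c + k * t1) = relPow S (p + c) := by
    intro k
    induction k with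
    | zero => intro c; simp
    | succ k ih =>
        intro c
        have h1 : p + c + (k + 1) * t1 = p + (c + t1) + k * t1 := by ring
        rw [h1, ih (c + t1)]
        have h2 : p + (c + t1) = q + c := by omega
        rw [h2, ← relPow_step hpq c]
  refine ⟨(p + 1) * t + p, ?_⟩
  have h3 : (p + 1) * t + p + ((p + 1) * t + p) + 1
      = p + ((p + 1) * t) + (p + 1) * t1 := by ring
  rw [h3, key (p + 1) ((p + 1) * t), Nat.add_comm p ((p + 1) * t)]

lemma pert [Infinite T] (c a : Matrix (Fin n) (Fin n) T) (P : Finset (Fin n × Fin n))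
    (hP : ∀ p ∈ P, ∃ r, c p.1 r ≠ 0 ∧ a r p.2 ≠ 0) :
    ∃ d : Fin n → T, (∀ r, d r ≠ 0) ∧
      ∀ p ∈ P, (∑ r, c p.1 r * d r * a r p.2) ≠ 0 := by
  induction P using Finset.induction_on with
  | empty => exact ⟨fun _ => 1, fun _ => one_ne_zero, by simp⟩
  | @insert p P hpP ih =>
    obtain ⟨d, hd0, hd⟩ := ih (fun q hq => hP q (mem_insert_of_mem hq))
    obtain ⟨r₀, hc0, ha0⟩ := hP p (mem_insert_self _ _)
    set Srest : Fin n × Fin n → T :=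
      fun q => ∑ r ∈ Finset.univ.erase r₀, c q.1 r * d r * a r q.2 with hSrest
    have hsum : ∀ (q : Fin n × Fin n) (x : T),
        (∑ r, c q.1 r * (Function.update d r₀ x) r * a r q.2)
          = c q.1 r₀ * x * a r₀ q.2 + Srest q := by
      intro q x
      rw [← Finset.add_sum_erase _ _ (mem_univ r₀)]
      congr 1
      · rw [Function.update_self]
      · exact Finset.sum_congr rfl fun r hr => by
          rw [Function.update_of_ne (Finset.ne_of_mem_erase hr)]
    have hsum' : ∀ q : Fin n × Fin n,
        (∑ r, c q.1 r * d r * a r q.2) = c q.1 r₀ * d r₀ * a r₀ q.2 + Srest q := by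
      intro q
      have := hsum q (d r₀)
      rwa [Function.update_eq_self] at this
    set bad : Finset T := insert (0 : T)
      ((insert p P).image fun q => (c q.1 r₀)⁻¹ * (-(Srest q)) * (a r₀ q.2)⁻¹) with hbad
    obtain ⟨x, hx⟩ := Infinite.exists_notMem_finset bad
    have hx0 : x ≠ 0 := fun h => hx (h ▸ mem_insert_self _ _)
    refine ⟨Function.update d r₀ x, ?_, ?_⟩
    · intro r
      rcases eq_or_ne r r₀ with rfl | hr
      · rwa [Function.update_self]
      · rw [Function.update_of_ne hr]; exact hd0 r
    · intro q hq
      rw [hsum q x]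
      set α := c q.1 r₀
      set β := a r₀ q.2
      rcases eq_or_ne (α * β) 0 with h0 | h0
      · have hαβ : α * x * β = 0 := by
          rcases mul_eq_zero.1 h0 with h | h
          · rw [h, zero_mul, zero_mul]
          · rw [h, mul_zero]
        have hq' : q ∈ P := by
          rcases Finset.mem_insert.1 hq with rfl | hq'
          · exact absurd h0 (mul_ne_zero hc0 ha0)
          · exact hq'
        rw [hαβ, zero_add]
        intro hcontra
        apply hd q hq'
        rw [hsum' q]
        have : α * d r₀ * β = 0 := by
          rcases mul_eq_zero.1 h0 with h | h
          · rw [h, zero_mul, zero_mul]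
          · rw [h, mul_zero]
        rw [this, zero_add, hcontra]
      · have hα : α ≠ 0 := fun h => h0 (by rw [h, zero_mul])
        have hβ : β ≠ 0 := fun h => h0 (by rw [h, mul_zero])
        intro hcontra
        apply hx
        apply Finset.mem_insert_of_mem
        refine Finset.mem_image.2 ⟨q, hq, ?_⟩
        have h1 : α * x * β = -(Srest q) := eq_neg_of_add_eq_zero_left hcontra
        rw [← h1, mul_assoc α x β, ← mul_assoc α⁻¹ α (x * β),
          inv_mul_cancel₀ hα, one_mul, mul_assoc, mul_inv_cancel₀ hβ, mul_one]

set_option maxHeartbeats 1000000 in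
lemma iterate [Infinite T] (a : (Matrix (Fin n) (Fin n) T)ˣ) (k : ℕ) :
    ∃ b : (Matrix (Fin n) (Fin n) T)ˣ, MemSemigroupGen a b ∧
      ∀ i j : Fin n, b.val i j ≠ 0 ↔ (i, j) ∈ relPow (suppF a.val) k := by
  induction k with
  | zero =>
      refine ⟨a, ⟨[a], ?_, ?_, ?_⟩, fun i j => (mem_suppF (M := a.val)).symm⟩ <;> simp
  | succ k ih =>
      obtain ⟨b, ⟨L, hL1, hL2, hL3⟩, hsupp⟩ := ih
      set S := suppF a.val with hS
      have hP : ∀ p ∈ relPow S (k + 1), ∃ r, b.val p.1 r ≠ 0 ∧ a.val r p.2 ≠ 0 := by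
        rintro ⟨i, j⟩ hp
        obtain ⟨r, hr1, hr2⟩ := mem_relComp.1 hp
        exact ⟨r, (hsupp i r).2 hr1, mem_suppF.1 hr2⟩
      obtain ⟨d, hd0, hd⟩ := pert b.val a.val _ hP
      have hDval : Matrix.diagonal d * Matrix.diagonal (fun r => (d r)⁻¹) = 1 := by
        rw [Matrix.diagonal_mul_diagonal,
          show (fun r => d r * (d r)⁻¹) = fun _ => (1 : T) from
            funext fun r => mul_inv_cancel₀ (hd0 r), Matrix.diagonal_one]
      have hDval' : Matrix.diagonal (fun r => (d r)⁻¹) * Matrix.diagonal d = 1 := by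
        rw [Matrix.diagonal_mul_diagonal,
          show (fun r => (d r)⁻¹ * d r) = fun _ => (1 : T) from
            funext fun r => inv_mul_cancel₀ (hd0 r), Matrix.diagonal_one]
      set Du : (Matrix (Fin n) (Fin n) T)ˣ :=
        ⟨Matrix.diagonal d, Matrix.diagonal (fun r => (d r)⁻¹), hDval, hDval'⟩ with hDu
      refine ⟨b * Du * a, ⟨L ++ [Du, a], ?_, ?_, ?_⟩, ?_⟩
      · intro x hx
        rcases List.mem_append.1 hx with hx | hx
        · exact hL1 x hx
        · rcases List.mem_cons.1 hx with rfl | hx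
          · exact Or.inr (Matrix.isDiag_diagonal d)
          · rcases List.mem_cons.1 hx with rfl | hx
            · exact Or.inl rfl
            · exact absurd hx List.not_mem_nil
      · exact List.mem_append.2 (Or.inl hL2)
      · rw [List.prod_append, hL3, List.prod_cons, List.prod_cons, List.prod_nil,
          mul_one, mul_assoc]
      · intro i j
        have hentry : (b * Du * a).val i j
            = ∑ r, b.val i r * d r * a.val r j := by
          rw [Units.val_mul, Units.val_mul]
          rw [Matrix.mul_apply]
          refine Finset.sum_congr rfl fun r _ => ?_
          rw [show Du.val = Matrix.diagonal d from rfl, Matrix.mul_diagonal]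
        rw [hentry]
        constructor
        · intro hne
          by_contra hmem
          apply hne
          refine Finset.sum_eq_zero fun r _ => ?_
          by_cases hb : b.val i r = 0
          · rw [hb, zero_mul, zero_mul]
          · have ha : a.val r j = 0 := by
              by_contra ha
              exact hmem (mem_relComp.2 ⟨r, (hsupp i r).1 hb, mem_suppF.2 ha⟩)
            rw [ha, mul_zero]
        · intro hmem
          exact hd (i, j) hmem

lemma rows_dep (b : (Matrix (Fin n) (Fin n) T)ˣ) (A : Finset (Fin n)) (i : Fin n)
    (hi : i ∉ A) (hz : ∀ j ∈ insert i A, ∀ k, k ∉ A → b.val j k = 0) : False := by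
  have hrow : ∀ cvec : Fin n → T, (∀ k, (∑ j, cvec j * b.val j k) = 0) →
      ∀ j, cvec j = 0 := by
    intro cvec h j
    have h1 : Matrix.vecMul cvec b.val = 0 := by
      funext k
      simpa [Matrix.vecMul, dotProduct] using h k
    have h2 := congrArg (fun v => Matrix.vecMul v (b⁻¹).val) h1
    simp only [Matrix.vecMul_vecMul, Matrix.zero_vecMul] at h2
    rw [Units.mul_inv, Matrix.vecMul_one] at h2
    exact congrFun h2 j
  have li : LinearIndependent T
      (fun j : ↥(insert i A) => (fun k : ↥A => b.val j.val k.val)) := by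
    rw [Fintype.linearIndependent_iff]
    intro g hg j
    set cvec : Fin n → T := fun j => if h : j ∈ insert i A then g ⟨j, h⟩ else 0 with hcvec
    have hc : ∀ j, cvec j = 0 := by
      refine hrow cvec fun k => ?_
      by_cases hk : k ∈ A
      · have e1 : (∑ j, cvec j * b.val j k)
            = ∑ j ∈ insert i A, cvec j * b.val j k := by
          refine (Finset.sum_subset (Finset.subset_univ _) fun x _ hx => ?_).symm
          rw [hcvec]; simp only [dif_neg hx, zero_mul]
        rw [e1, ← Finset.sum_attach (insert i A) (fun j => cvec j * b.val j k)]
        have e2 : ∀ j : ↥(insert i A), cvec j.val = g j := by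
          intro j; rw [hcvec]; simp only [dif_pos j.property]
        calc (∑ j : ↥(insert i A), cvec j.val * b.val j.val k)
            = ∑ j : ↥(insert i A), g j * b.val j.val k :=
              Finset.sum_congr rfl fun j _ => by rw [e2 j]
          _ = 0 := by
              have := congrFun hg ⟨k, hk⟩
              simpa [Finset.sum_apply] using this
      · refine Finset.sum_eq_zero fun j _ => ?_
        by_cases hj : j ∈ insert i A
        · rw [hz j hj k hk, mul_zero]
        · rw [hcvec]; simp only [dif_neg hj, zero_mul]
    have := hc j.val
    rw [hcvec] at this
    simpa [dif_pos j.property] using this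
  have hcard := li.fintype_card_le_finrank
  rw [Module.finrank_pi] at hcard
  simp only [Fintype.card_coe, Finset.card_insert_of_notMem hi] at hcard
  omega

end SemigroupGood

theorem exists_mem_semigroup_good_rows
    {n : ℕ} {T : Type*} [DivisionRing T] [Infinite T] (hn : 2 ≤ n)
    (a : (Matrix (Fin n) (Fin n) T)ˣ) :
    ∃ b : (Matrix (Fin n) (Fin n) T)ˣ, MemSemigroupGen a b ∧
      (∀ i, b.val i i ≠ 0) ∧
      (∀ i j, b.val i j = 0 → ∀ r, b.val i r * b.val r j = 0) := by
  classical
  open SemigroupGood in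
  obtain ⟨m, hm⟩ := exists_idem (suppF a.val)
  obtain ⟨b, hmem, hsupp⟩ := SemigroupGood.iterate a m
  have htrans : ∀ i r j : Fin n, b.val i r ≠ 0 → b.val r j ≠ 0 → b.val i j ≠ 0 := by
    intro i r j h1 h2
    exact (hsupp i j).2 (hm ▸ relPow_trans m m ((hsupp i r).1 h1) ((hsupp r j).1 h2))
  refine ⟨b, hmem, ?_, ?_⟩
  · intro i hbii
    set A : Finset (Fin n) := Finset.univ.filter (fun k => b.val i k ≠ 0) with hA
    have hiA : i ∉ A := by simp [hA, hbii]
    refine SemigroupGood.rows_dep b A i hiA ?_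
    intro j hj k hk
    have hbik : b.val i k = 0 := by
      by_contra h; exact hk (by simp [hA, h])
    rcases Finset.mem_insert.1 hj with rfl | hj
    · exact hbik
    · have hbij : b.val i j ≠ 0 := by
        simp only [hA, Finset.mem_filter] at hj; exact hj.2
      by_contra h
      exact (htrans i j k hbij h) hbik
  · intro i j hbij r
    by_contra h
    exact (htrans i r j (left_ne_zero_of_mul h) (right_ne_zero_of_mul h)) hbij
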